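/- Fix μ > 0, N ≥ 2, ε ∈ (0, 1/2), and set p_0 = 1 − ε, K = N − 1, p(s) = e^{μs}/(e^{μs}+K), q = μ^{-1} log((1−ε)(N−1)/ε). Let f(s) = A + B p(s) + (2s/μ)(1 − 2p(s)). Then the boundary conditions f(q) = 0 and f'(0) = 0 determine A and B uniquely, and the resulting value f(0) equals M_PR = (2/μ²)[ ((N−2)/(N−1))(N p_0 − 1) + (2p_0 − 1) log((1−ε)/(ε/(N−1))) ]. -/

import Mathlib

/-- Posner–Rumsey value: with `p₀ = 1 - ε`, `K = N - 1`,
`p s = exp (μ s)/(exp (μ s) + K)`, `q = μ⁻¹ log ((1-ε)(N-1)/ε)` and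
`f A B s = A + B * p s + (2 s/μ)(1 - 2 p s)`, the boundary conditions
`f A B q = 0` and `(f A B)' 0 = 0` determine `(A, B)` uniquely, and for any such
`(A, B)` the value `f A B 0` equals
`M_PR = (2/μ²) [ ((N-2)/(N-1)) (N p₀ - 1) + (2 p₀ - 1) log ((1-ε)/(ε/(N-1))) ]`. -/
theorem statement5 (μ : ℝ) (hμ : 0 < μ) (N : ℕ) (hN : 2 ≤ N)
    (ε : ℝ) (hε : ε ∈ Set.Ioo (0 : ℝ) (1 / 2))
    (p₀ K q : ℝ) (hp₀ : p₀ = 1 - ε) (hK : K = (N : ℝ) - 1)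
    (hq : q = μ⁻¹ * Real.log ((1 - ε) * ((N : ℝ) - 1) / ε))
    (p : ℝ → ℝ) (hp : ∀ s, p s = Real.exp (μ * s) / (Real.exp (μ * s) + K))
    (f : ℝ → ℝ → ℝ → ℝ)
    (hf : ∀ A B s, f A B s = A + B * p s + (2 * s / μ) * (1 - 2 * p s))
    (MPR : ℝ)
    (hMPR : MPR = (2 / μ ^ 2) *
      (((N : ℝ) - 2) / ((N : ℝ) - 1) * ((N : ℝ) * p₀ - 1)
        + (2 * p₀ - 1) * Real.log ((1 - ε) / (ε / ((N : ℝ) - 1))))) :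
    (∃! AB : ℝ × ℝ, f AB.1 AB.2 q = 0 ∧ deriv (f AB.1 AB.2) 0 = 0) ∧
    ∀ A B : ℝ, f A B q = 0 → deriv (f A B) 0 = 0 → f A B 0 = MPR := by
  obtain ⟨hε0, hε2⟩ := hε
  have hε1 : ε < 1 := lt_trans hε2 (by norm_num)
  have hn2 : (2:ℝ) ≤ (N:ℝ) := by exact_mod_cast hN
  have hKpos : (0:ℝ) < K := by rw [hK]; linarith
  have hKN : 1 + K = (N:ℝ) := by rw [hK]; ring
  have hNpos : (0:ℝ) < (N:ℝ) := by linarith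
  have hNne : ((N:ℝ)) ≠ 0 := ne_of_gt hNpos
  have hN1ne : ((N:ℝ) - 1) ≠ 0 := by rw [← hK]; exact ne_of_gt hKpos
  have hμ' : μ ≠ 0 := ne_of_gt hμ
  have hεne : ε ≠ 0 := ne_of_gt hε0
  have h1εpos : (0:ℝ) < 1 - ε := by linarith
  -- p at 0
  have hp0 : p 0 = 1 / (N:ℝ) := by
    rw [hp]; simp [Real.exp_zero, hKN]
  -- p at q
  have hXpos : (0:ℝ) < (1 - ε) * ((N : ℝ) - 1) / ε := by
    apply div_pos _ hε0
    apply mul_pos h1εpos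
    linarith
  have hμq : μ * q = Real.log ((1 - ε) * ((N : ℝ) - 1) / ε) := by
    rw [hq]; field_simp
  have hpq : p q = 1 - ε := by
    rw [hp, hμq, Real.exp_log hXpos, hK]
    have hd : (0:ℝ) < (1 - ε) * ((N : ℝ) - 1) / ε + ((N:ℝ) - 1) := by
      have : (0:ℝ) < (N:ℝ) - 1 := by linarith
      linarith [hXpos]
    rw [div_eq_iff (ne_of_gt hd)]
    field_simp
    ring
  -- derivative of p at 0
  have hdenne : Real.exp (μ * 0) + K ≠ 0 := by positivity
  have hE : HasDerivAt (fun s => Real.exp (μ * s)) μ 0 := by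
    have h1 : HasDerivAt (fun s : ℝ => μ * s) (μ * 1) 0 := (hasDerivAt_id 0).const_mul μ
    have := (Real.hasDerivAt_exp (μ * 0)).comp 0 h1
    simpa [Function.comp_def] using this
  have hP : HasDerivAt p (μ * K / (N:ℝ)^2) 0 := by
    have hpe : p = fun s => Real.exp (μ * s) / (Real.exp (μ * s) + K) := funext hp
    have h := hE.div (hE.add_const K) hdenne
    rw [hpe]
    refine h.congr_deriv ?_
    simp only [Real.exp_zero, mul_zero]
    rw [hK]
    field_simp
    ring_nf
    field_simp
  -- derivative of f at 0
  have hderiv : ∀ A B : ℝ, deriv (f A B) 0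
      = B * (μ * K / (N:ℝ)^2) + (2 / μ) * (1 - 2 * (1 / (N:ℝ))) := by
    intro A B
    have hfe : f A B = fun s => A + B * p s + (2 * s / μ) * (1 - 2 * p s) := by
      funext s; exact hf A B s
    have hu : HasDerivAt (fun s : ℝ => 2 * s / μ) (2 / μ) 0 := by
      have : HasDerivAt (fun s : ℝ => 2 * s) (2 * 1) 0 := (hasDerivAt_id 0).const_mul 2
      simpa using this.div_const μ
    have hv : HasDerivAt (fun s : ℝ => 1 - 2 * p s) (-(2 * (μ * K / (N:ℝ)^2))) 0 :=
      (hP.const_mul 2).const_sub 1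
    have hBp : HasDerivAt (fun s : ℝ => B * p s) (B * (μ * K / (N:ℝ)^2)) 0 := hP.const_mul B
    have htot := ((hBp.const_add A).add (hu.mul hv))
    rw [hfe]
    refine htot.deriv.trans ?_
    rw [hp0]
    ring
  -- characterize the solutions
  set D : ℝ := μ * K / (N:ℝ)^2 with hD
  have hDne : D ≠ 0 := by
    rw [hD]; positivity
  set C : ℝ := (2 / μ) * (1 - 2 * (1 / (N:ℝ))) with hC
  set B₀ : ℝ := -C / D with hB₀
  set A₀ : ℝ := -(B₀ * (1 - ε) + (2 * q / μ) * (1 - 2 * (1 - ε))) with hA₀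
  have hchar : ∀ A B : ℝ, (f A B q = 0 ∧ deriv (f A B) 0 = 0) ↔ (A = A₀ ∧ B = B₀) := by
    intro A B
    rw [hderiv A B, hf A B q, hpq]
    constructor
    · rintro ⟨h1, h2⟩
      have hB : B = B₀ := by
        rw [hB₀]
        field_simp
        linarith [h2]
      refine ⟨?_, hB⟩
      rw [hA₀, ← hB]
      linarith [h1]
    · rintro ⟨hA, hB⟩
      constructor
      · rw [hA, hA₀, hB]; ring
      · rw [hB, hB₀]; field_simp; ring
  -- final value computation
  have hval : A₀ + B₀ * (1 / (N:ℝ)) = MPR := by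
    have hlog : Real.log ((1 - ε) / (ε / ((N : ℝ) - 1)))
        = Real.log ((1 - ε) * ((N : ℝ) - 1) / ε) := by
      congr 1
      field_simp
    have hq' : q = Real.log ((1 - ε) * ((N : ℝ) - 1) / ε) / μ := by
      rw [hq]; ring
    rw [hA₀, hB₀, hC, hD, hMPR, hlog, hq', hp₀, hK]
    set L := Real.log ((1 - ε) * ((N : ℝ) - 1) / ε) with hL
    field_simp
    ring
  constructor
  · refine ⟨(A₀, B₀), ?_, ?_⟩
    · exact (hchar A₀ B₀).mpr ⟨rfl, rfl⟩
    · rintro ⟨A, B⟩ h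
      have := (hchar A B).mp h
      simp at this ⊢
      exact ⟨this.1, this.2⟩
  · intro A B h1 h2
    obtain ⟨hA, hB⟩ := (hchar A B).mp ⟨h1, h2⟩
    rw [hf A B 0, hp0, hA, hB]
    simpa using hval
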